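/- Let A, B, C, D be points on the unit sphere in ℝ³ and let ε ≥ 0. If the sum of the six pairwise distances ‖A − B‖ + ‖A − C‖ + ‖A − D‖ + ‖B − C‖ + ‖B − D‖ + ‖C − D‖ is at least 4√6 − ε, then each of the six pairwise distances lies in the interval [4√6/6 − 4√ε, 4√6/6 + 4√ε]. -/

import Mathlib

private lemma mid6 (r s X P Q : ℝ) (hr2 : r^2 = 6) (hra : 2 ≤ r) (hrb : r ≤ 5/2)
    (hs : 0 ≤ s) (hcase : s^2 ≤ 1/6)
    (hA0 : X^2 ≤ 36*Q - 6*P^2) (hQ16 : Q ≤ 16) (hPge : 4*r - s^2 ≤ P) :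
    X^2 ≤ 120*s^2 ∧ P ≤ 4*r := by
  have hP0 : 0 ≤ 4*r - s^2 := by nlinarith
  have hB : (4*r-s^2)^2 ≤ P^2 := pow_le_pow_left₀ hP0 hPge 2
  have hexp : (4*r - s^2)^2 = 96 - 8*(r*s^2) + s^4 := by linear_combination 16*hr2
  have hE : 48*(r*s^2) ≤ 120*s^2 := by nlinarith [sq_nonneg s]
  have hF : (0:ℝ) ≤ s^4 := by positivity
  have hP96 : P^2 ≤ 96 := by nlinarith [sq_nonneg X]
  refine ⟨by linarith, by nlinarith⟩

private lemma endgame (r s d P : ℝ) (hs : 0 ≤ s) (hshalf : s ≤ 1/2) (hra : 2 ≤ r)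
    (hdev : (6*d - P)^2 ≤ 120*s^2) (hPge : 4*r - s^2 ≤ P) (hPle : P ≤ 4*r) :
    4*r/6 - 4*s ≤ d ∧ d ≤ 4*r/6 + 4*s := by
  have hXu : 6*d - P ≤ 11*s := by nlinarith [hdev]
  have hXl : -(11*s) ≤ 6*d - P := by nlinarith [hdev]
  have hs2 : s^2 ≤ s := by nlinarith
  exact ⟨by linarith, by linarith⟩

private lemma key6 (r s d1 d2 d3 d4 d5 d6 : ℝ) (hr2 : r^2 = 6) (hr0 : 0 ≤ r)
    (hs : 0 ≤ s)
    (h1 : 0 ≤ d1) (h1' : d1 ≤ 2) (h2 : 0 ≤ d2) (h2' : d2 ≤ 2)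
    (h3 : 0 ≤ d3) (h3' : d3 ≤ 2) (h4 : 0 ≤ d4) (h4' : d4 ≤ 2)
    (h5 : 0 ≤ d5) (h5' : d5 ≤ 2) (h6 : 0 ≤ d6) (h6' : d6 ≤ 2)
    (hsum : d1+d2+d3+d4+d5+d6 ≥ 4*r - s^2)
    (hsq : d1^2+d2^2+d3^2+d4^2+d5^2+d6^2 ≤ 16) :
    4*r/6 - 4*s ≤ d1 ∧ d1 ≤ 4*r/6 + 4*s := by
  have hra : 2 ≤ r := by nlinarith
  have hrb : r ≤ 5/2 := by nlinarith
  by_cases hcase : s^2 ≤ 1/6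
  · have hshalf : s ≤ 1/2 := by nlinarith
    have hA0 : (6*d1-(d1+d2+d3+d4+d5+d6))^2
        ≤ 36*(d1^2+d2^2+d3^2+d4^2+d5^2+d6^2) - 6*(d1+d2+d3+d4+d5+d6)^2 := by
      linarith [sq_nonneg (6*d2-(d1+d2+d3+d4+d5+d6)), sq_nonneg (6*d3-(d1+d2+d3+d4+d5+d6)),
        sq_nonneg (6*d4-(d1+d2+d3+d4+d5+d6)), sq_nonneg (6*d5-(d1+d2+d3+d4+d5+d6)),
        sq_nonneg (6*d6-(d1+d2+d3+d4+d5+d6))]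
    obtain ⟨hdev, hPle⟩ := mid6 r s _ _ _ hr2 hra hrb hs hcase hA0 hsq hsum
    exact endgame r s d1 _ hs hshalf hra hdev hsum hPle
  · constructor <;> nlinarith

/-- Lemma: a tetrahedron inscribed in the unit sphere with total edge length at least
`4√6 - ε` has all edge lengths within `4√ε` of `4√6/6`. -/
theorem stmt3 (A B C D : EuclideanSpace ℝ (Fin 3))
    (hA : ‖A‖ = 1) (hB : ‖B‖ = 1) (hC : ‖C‖ = 1) (hD : ‖D‖ = 1)
    (ε : ℝ) (hε : 0 ≤ ε)
    (hper : ‖A - B‖ + ‖A - C‖ + ‖A - D‖ + ‖B - C‖ + ‖B - D‖ + ‖C - D‖ ≥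
      4 * Real.sqrt 6 - ε) :
    ‖A - B‖ ∈ Set.Icc (4 * Real.sqrt 6 / 6 - 4 * Real.sqrt ε) (4 * Real.sqrt 6 / 6 + 4 * Real.sqrt ε) ∧
    ‖A - C‖ ∈ Set.Icc (4 * Real.sqrt 6 / 6 - 4 * Real.sqrt ε) (4 * Real.sqrt 6 / 6 + 4 * Real.sqrt ε) ∧
    ‖A - D‖ ∈ Set.Icc (4 * Real.sqrt 6 / 6 - 4 * Real.sqrt ε) (4 * Real.sqrt 6 / 6 + 4 * Real.sqrt ε) ∧
    ‖B - C‖ ∈ Set.Icc (4 * Real.sqrt 6 / 6 - 4 * Real.sqrt ε) (4 * Real.sqrt 6 / 6 + 4 * Real.sqrt ε) ∧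
    ‖B - D‖ ∈ Set.Icc (4 * Real.sqrt 6 / 6 - 4 * Real.sqrt ε) (4 * Real.sqrt 6 / 6 + 4 * Real.sqrt ε) ∧
    ‖C - D‖ ∈ Set.Icc (4 * Real.sqrt 6 / 6 - 4 * Real.sqrt ε) (4 * Real.sqrt 6 / 6 + 4 * Real.sqrt ε) := by
  have eAB : ‖A - B‖^2 = 2 - 2 * inner ℝ A B := by rw [@norm_sub_sq_real, hA, hB]; ring
  have eAC : ‖A - C‖^2 = 2 - 2 * inner ℝ A C := by rw [@norm_sub_sq_real, hA, hC]; ring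
  have eAD : ‖A - D‖^2 = 2 - 2 * inner ℝ A D := by rw [@norm_sub_sq_real, hA, hD]; ring
  have eBC : ‖B - C‖^2 = 2 - 2 * inner ℝ B C := by rw [@norm_sub_sq_real, hB, hC]; ring
  have eBD : ‖B - D‖^2 = 2 - 2 * inner ℝ B D := by rw [@norm_sub_sq_real, hB, hD]; ring
  have eCD : ‖C - D‖^2 = 2 - 2 * inner ℝ C D := by rw [@norm_sub_sq_real, hC, hD]; ring
  have eS : ‖A+B+C+D‖^2 = 4 + 2*((inner ℝ A B : ℝ) + inner ℝ A C + inner ℝ A D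
      + inner ℝ B C + inner ℝ B D + inner ℝ C D) := by
    rw [← real_inner_self_eq_norm_sq]
    simp only [inner_add_left, inner_add_right, real_inner_self_eq_norm_sq,
      hA, hB, hC, hD, real_inner_comm B A, real_inner_comm C A, real_inner_comm D A,
      real_inner_comm C B, real_inner_comm D B, real_inner_comm D C]
    ring
  have hS : (0:ℝ) ≤ ‖A+B+C+D‖^2 := sq_nonneg _
  have hQ : ‖A-B‖^2+‖A-C‖^2+‖A-D‖^2+‖B-C‖^2+‖B-D‖^2+‖C-D‖^2 ≤ 16 := by linarith
  have bAB : ‖A - B‖ ≤ 2 := by have := norm_sub_le A B; rw [hA, hB] at this; linarith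
  have bAC : ‖A - C‖ ≤ 2 := by have := norm_sub_le A C; rw [hA, hC] at this; linarith
  have bAD : ‖A - D‖ ≤ 2 := by have := norm_sub_le A D; rw [hA, hD] at this; linarith
  have bBC : ‖B - C‖ ≤ 2 := by have := norm_sub_le B C; rw [hB, hC] at this; linarith
  have bBD : ‖B - D‖ ≤ 2 := by have := norm_sub_le B D; rw [hB, hD] at this; linarith
  have bCD : ‖C - D‖ ≤ 2 := by have := norm_sub_le C D; rw [hC, hD] at this; linarith
  have hr2 : (Real.sqrt 6)^2 = 6 := Real.sq_sqrt (by norm_num)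
  have hr0 : 0 ≤ Real.sqrt 6 := Real.sqrt_nonneg 6
  have hs0 : 0 ≤ Real.sqrt ε := Real.sqrt_nonneg ε
  have hsε : (Real.sqrt ε)^2 = ε := Real.sq_sqrt hε
  set r := Real.sqrt 6
  set s := Real.sqrt ε
  have n0 : ∀ X Y : EuclideanSpace ℝ (Fin 3), 0 ≤ ‖X - Y‖ := fun X Y => norm_nonneg _
  refine ⟨Set.mem_Icc.mpr ?_, Set.mem_Icc.mpr ?_, Set.mem_Icc.mpr ?_,
    Set.mem_Icc.mpr ?_, Set.mem_Icc.mpr ?_, Set.mem_Icc.mpr ?_⟩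
  · exact key6 r s _ _ _ _ _ _ hr2 hr0 hs0 (n0 A B) bAB (n0 A C) bAC (n0 A D) bAD
      (n0 B C) bBC (n0 B D) bBD (n0 C D) bCD (by rw [hsε]; linarith) (by linarith)
  · exact key6 r s _ _ _ _ _ _ hr2 hr0 hs0 (n0 A C) bAC (n0 A B) bAB (n0 A D) bAD
      (n0 B C) bBC (n0 B D) bBD (n0 C D) bCD (by rw [hsε]; linarith) (by linarith)
  · exact key6 r s _ _ _ _ _ _ hr2 hr0 hs0 (n0 A D) bAD (n0 A B) bAB (n0 A C) bAC
      (n0 B C) bBC (n0 B D) bBD (n0 C D) bCD (by rw [hsε]; linarith) (by linarith)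
  · exact key6 r s _ _ _ _ _ _ hr2 hr0 hs0 (n0 B C) bBC (n0 A B) bAB (n0 A C) bAC
      (n0 A D) bAD (n0 B D) bBD (n0 C D) bCD (by rw [hsε]; linarith) (by linarith)
  · exact key6 r s _ _ _ _ _ _ hr2 hr0 hs0 (n0 B D) bBD (n0 A B) bAB (n0 A C) bAC
      (n0 A D) bAD (n0 B C) bBC (n0 C D) bCD (by rw [hsε]; linarith) (by linarith)
  · exact key6 r s _ _ _ _ _ _ hr2 hr0 hs0 (n0 C D) bCD (n0 A B) bAB (n0 A C) bAC
      (n0 A D) bAD (n0 B C) bBC (n0 B D) bBD (by rw [hsε]; linarith) (by linarith)
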